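/- Let 𝕋_q be a directed spanning tree of the strongly connected directed graph ℕ rooted at vertex q with all arcs oriented away from q, and for each vertex i ≠ q let ρ_i denote the unique in-neighbor (parent) of i in 𝕋_q. Choose v ∈ ℝ^m with v_q = 0 and with v_1,…,v_m pairwise distinct and v_i ≠ 0 for all i ≠ q. Define G = [g_{ij}] ∈ ℝ^{m×m} by g_{ii} = v_i for all i, g_{iρ_i} = −v_i for all i ≠ q, and g_{ij} = 0 otherwise. Then the pair (G, b_q) is controllable, where b_q is the q-th standard unit vector of ℝ^m. -/

import Mathlib

open Matrix Finset

/-- The controllability matrix `[B, AB, …, A^{k-1}B]` of the pair `(A, B)`. -/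
def ctrbMat {ι κ : Type*} [Fintype ι] [DecidableEq ι]
    (A : Matrix ι ι ℝ) (B : Matrix ι κ ℝ) (k : ℕ) : Matrix ι (Fin k × κ) ℝ :=
  Matrix.of fun i p => ((A ^ (p.1 : ℕ)) * B) i p.2

/-- `(A, B)` is controllable if its controllability matrix has full rank. -/
def Controllable {ι κ : Type*} [Fintype ι] [DecidableEq ι] [Fintype κ]
    (A : Matrix ι ι ℝ) (B : Matrix ι κ ℝ) : Prop :=
  (ctrbMat A B (Fintype.card ι)).rank = Fintype.card ι

/-- The controllability index: the smallest positive `k` with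
`rank [B, AB, …, A^{k-1}B]` full. -/
noncomputable def ctrlIndex {ι κ : Type*} [Fintype ι] [DecidableEq ι] [Fintype κ]
    (A : Matrix ι ι ℝ) (B : Matrix ι κ ℝ) : ℕ :=
  sInf {k | 0 < k ∧ (ctrbMat A B k).rank = Fintype.card ι}

/-- `(C, A)` is observable iff `(Aᵀ, Cᵀ)` is controllable. -/
def Observable {ι κ : Type*} [Fintype ι] [DecidableEq ι] [Fintype κ]
    (C : Matrix κ ι ℝ) (A : Matrix ι ι ℝ) : Prop :=
  Controllable Aᵀ Cᵀ

namespace TreeCtrb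

open Polynomial

variable {m : ℕ} (q : Fin m) (ρ : Fin m → Fin m) (v : Fin m → ℝ)

/-- The tree matrix. -/
noncomputable def G : Matrix (Fin m) (Fin m) ℝ :=
  Matrix.of fun i j : Fin m =>
    if j = i then v i else if i ≠ q ∧ j = ρ i then -(v i) else 0

/-- `L p i` is the `(i, q)` entry of `p(G)`, i.e. the `i`-th entry of `p(G) e_q`. -/
noncomputable def L (p : ℝ[X]) (i : Fin m) : ℝ := (Polynomial.aeval (G q ρ v) p) i q

variable {q ρ v}

section basic

lemma G_apply_q (hvq : v q = 0) (j : Fin m) : G q ρ v q j = 0 := by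
  simp only [G, Matrix.of_apply]
  split_ifs with h1 h2
  · subst h1; exact hvq
  · exact absurd h2.1 (by simp)
  · rfl

lemma pow_apply_q (hvq : v q = 0) (n : ℕ) (j : Fin m) : (G q ρ v ^ (n + 1)) q j = 0 := by
  rw [pow_succ', Matrix.mul_apply]
  simp [G_apply_q hvq]

lemma L_coeff_zero (hvq : v q = 0) (p : ℝ[X]) : L q ρ v p q = p.coeff 0 := by
  rw [L, Polynomial.aeval_eq_sum_range, Matrix.sum_apply]
  rw [Finset.sum_eq_single 0]
  · simp [Matrix.one_apply]
  · intro n _ hn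
    obtain ⟨n', rfl⟩ := Nat.exists_eq_succ_of_ne_zero hn
    rw [Matrix.smul_apply, Nat.succ_eq_add_one, pow_apply_q hvq, smul_zero]
  · intro h
    exact absurd (Finset.mem_range.2 (Nat.succ_pos _)) h

lemma L_C {i : Fin m} (hi : i ≠ q) (c : ℝ) : L q ρ v (C c) i = 0 := by
  rw [L, aeval_C, Algebra.algebraMap_eq_smul_one, Matrix.smul_apply,
    Matrix.one_apply_ne hi, smul_zero]

lemma L_add (p r : ℝ[X]) (i : Fin m) :
    L q ρ v (p + r) i = L q ρ v p i + L q ρ v r i := by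
  rw [L, _root_.map_add, Matrix.add_apply]; rfl

lemma L_C_mul (c : ℝ) (p : ℝ[X]) (i : Fin m) :
    L q ρ v (C c * p) i = c * L q ρ v p i := by
  have h : (aeval (G q ρ v)) (C c * p) = c • (aeval (G q ρ v)) p := by
    rw [_root_.map_mul, aeval_C, Algebra.algebraMap_eq_smul_one, smul_mul_assoc, one_mul]
  rw [L, h, Matrix.smul_apply, smul_eq_mul]; rfl

lemma L_X_mul (hρne : ∀ i, i ≠ q → ρ i ≠ i) (p : ℝ[X]) {i : Fin m} (hi : i ≠ q) :
    L q ρ v (X * p) i = v i * L q ρ v p i - v i * L q ρ v p (ρ i) := by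
  have hρi : ρ i ≠ i := hρne i hi
  rw [L, _root_.map_mul, aeval_X, Matrix.mul_apply]
  have key : ∀ k : Fin m, G q ρ v i k * (aeval (G q ρ v) p) k q =
      (if k = i then v i * (aeval (G q ρ v) p) i q else 0) +
      (if k = ρ i then -(v i) * (aeval (G q ρ v) p) (ρ i) q else 0) := by
    intro k
    by_cases h1 : k = i
    · subst h1
      rw [if_pos rfl, if_neg (fun h => hρi h.symm)]
      simp [G]
    · by_cases h2 : k = ρ i
      · subst h2
        rw [if_neg h1, if_pos rfl]
        simp [G, h1, hi]
      · simp [G, h1, h2]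
  rw [Finset.sum_congr rfl (fun k _ => key k), Finset.sum_add_distrib,
    Finset.sum_ite_eq' Finset.univ i, Finset.sum_ite_eq' Finset.univ (ρ i)]
  simp [L]
  ring

lemma L_factor (hρne : ∀ i, i ≠ q → ρ i ≠ i) (p : ℝ[X]) {i : Fin m} (hi : i ≠ q) :
    L q ρ v ((X - C (v i)) * p) i = -(v i) * L q ρ v p (ρ i) := by
  have h : (X - C (v i)) * p = X * p + C (-(v i)) * p := by
    rw [map_neg]; ring
  rw [h, L_add, L_C_mul, L_X_mul hρne p hi]
  ring

end basic

section tel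

variable (hvq : v q = 0) (hρne : ∀ i, i ≠ q → ρ i ≠ i)
include hvq hρne

lemma tel1 : ∀ (k : ℕ) (i : Fin m), ρ^[k] i = q → (∀ s < k, ρ^[s] i ≠ q) →
    ∀ g : ℝ[X], L q ρ v ((∏ s ∈ Finset.range (k + 1), (X - C (v (ρ^[s] i)))) * g) i = 0 := by
  intro k
  induction k with
  | zero =>
    intro i hk _ g
    simp only [Function.iterate_zero_apply] at hk
    subst hk
    rw [Finset.prod_range_one, Function.iterate_zero_apply, hvq, map_zero, sub_zero]
    rw [L_coeff_zero hvq, Polynomial.mul_coeff_zero, Polynomial.coeff_X_zero, zero_mul]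
  | succ k IH =>
    intro i hk hmin g
    have hi : i ≠ q := by
      simpa using hmin 0 (Nat.succ_pos k)
    have hstep : ∀ s : ℕ, ρ^[s + 1] i = ρ^[s] (ρ i) := fun s => Function.iterate_succ_apply ρ s i
    have hprod : (∏ s ∈ Finset.range (k + 2), (X - C (v (ρ^[s] i)))) * g =
        (X - C (v i)) * ((∏ s ∈ Finset.range (k + 1), (X - C (v (ρ^[s] (ρ i))))) * g) := by
      rw [Finset.prod_range_succ' (fun s => (X : ℝ[X]) - C (v (ρ^[s] i))) (k + 1)]
      simp only [hstep, Function.iterate_zero_apply]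
      ring
    rw [hprod, L_factor hρne _ hi]
    rw [IH (ρ i) (by rw [← hstep]; exact hk)
      (fun s hs => by rw [← hstep]; exact hmin (s + 1) (by omega)) g]
    ring

lemma tel2 : ∀ (k : ℕ) (i : Fin m), ρ^[k] i = q → (∀ s < k, ρ^[s] i ≠ q) →
    ∀ P : ℝ[X], P.natDegree ≤ k →
    L q ρ v P i = (∏ s ∈ Finset.range k, -(v (ρ^[s] i))) * P.coeff k := by
  intro k
  induction k with
  | zero =>
    intro i hk _ P _
    simp only [Function.iterate_zero_apply] at hk
    subst hk
    rw [L_coeff_zero hvq, Finset.range_zero, Finset.prod_empty, one_mul]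
  | succ k IH =>
    intro i hk hmin P hdeg
    have hi : i ≠ q := by simpa using hmin 0 (Nat.succ_pos k)
    have hstep : ∀ s : ℕ, ρ^[s + 1] i = ρ^[s] (ρ i) := fun s => Function.iterate_succ_apply ρ s i
    set S := P /ₘ (X - C (v i)) with hS
    have hmonic : (X - C (v i)).Monic := monic_X_sub_C (v i)
    have hPeq : P = C (P.eval (v i)) + (X - C (v i)) * S := by
      conv_lhs => rw [← modByMonic_add_div P (X - C (v i))]
      rw [modByMonic_X_sub_C_eq_C_eval]
    have hdegS : S.natDegree ≤ k := by
      rw [hS, natDegree_divByMonic P hmonic]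
      simp only [natDegree_X_sub_C]
      omega
    have hLP : L q ρ v P i = -(v i) * L q ρ v S (ρ i) := by
      conv_lhs => rw [hPeq]
      rw [L_add, L_C hi, L_factor hρne _ hi, zero_add]
    have hcoeff : P.coeff (k + 1) = S.coeff k := by
      conv_lhs => rw [hPeq]
      rw [coeff_add, coeff_C, if_neg (Nat.succ_ne_zero k), zero_add, sub_mul, coeff_sub,
        coeff_X_mul, coeff_C_mul, coeff_eq_zero_of_natDegree_lt (lt_of_le_of_lt hdegS (Nat.lt_succ_self k))]
      ring
    rw [hLP, IH (ρ i) (by rw [← hstep]; exact hk)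
      (fun s hs => by rw [← hstep]; exact hmin (s + 1) (by omega)) S hdegS, hcoeff]
    rw [Finset.prod_range_succ' (fun s => -(v (ρ^[s] i))) k]
    simp only [hstep, Function.iterate_zero_apply]
    ring

end tel

section vanish

variable (hvq : v q = 0) (hρne : ∀ i, i ≠ q → ρ i ≠ i)
  (hρroot : ∀ i : Fin m, ∃ k : ℕ, ρ^[k] i = q)
  (hvdist : Function.Injective v) (hvne : ∀ i, i ≠ q → v i ≠ 0)

include hvq hρne hρroot hvdist hvne in
lemma vanish (p : ℝ[X]) (hL : ∀ j, L q ρ v p j = 0) :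
    ∀ (k : ℕ) (i : Fin m), ρ^[k] i = q → (∀ s < k, ρ^[s] i ≠ q) → p.eval (v i) = 0 := by
  intro k
  induction k using Nat.strong_induction_on with
  | _ k IH =>
    intro i hk hmin
    rcases Nat.eq_zero_or_pos k with hk0 | hk0
    · subst hk0
      simp only [Function.iterate_zero_apply] at hk
      subst hk
      rw [hvq, ← Polynomial.coeff_zero_eq_eval_zero, ← L_coeff_zero hvq p]
      exact hL _
    -- path vertices are pairwise distinct
    have hpath : ∀ a b : ℕ, a ≤ k → b ≤ k → ρ^[a] i = ρ^[b] i → a = b := by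
      have key : ∀ a b : ℕ, a < b → b ≤ k → ρ^[a] i = ρ^[b] i → False := by
        intro a b hab hbk hco
        have : ρ^[(k - b) + a] i = q := by
          rw [Function.iterate_add_apply, hco, ← Function.iterate_add_apply]
          rw [Nat.sub_add_cancel hbk] at *
          exact hk
        exact hmin _ (by omega) this
      intro a b ha hb hco
      rcases lt_trichotomy a b with h | h | h
      · exact absurd hco (fun hc => key a b h hb hc)
      · exact h
      · exact absurd hco.symm (fun hc => key b a h ha hc)
    set Pb : ℝ[X] := ∏ s ∈ Finset.range (k + 1), (X - C (v (ρ^[s] i))) with hPb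
    have hPbmonic : Pb.Monic := monic_prod_of_monic _ _ (fun s _ => monic_X_sub_C _)
    set P : ℝ[X] := p %ₘ Pb with hPdef
    have hPeq : P + Pb * (p /ₘ Pb) = p := modByMonic_add_div p Pb
    have hPbvi : Pb.eval (v i) = 0 := by
      rw [hPb, Polynomial.eval_prod]
      apply Finset.prod_eq_zero (Finset.mem_range.2 (Nat.succ_pos k))
      simp
    have hPbdeg : Pb.natDegree = k + 1 := by
      rw [hPb, Polynomial.natDegree_prod _ _ (fun s _ => X_sub_C_ne_zero _)]
      simp [natDegree_X_sub_C]
    have hPdeg : P.natDegree ≤ k := by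
      rcases eq_or_ne P 0 with h | h
      · simp [h]
      · have h2 : P.natDegree < Pb.natDegree :=
          Polynomial.natDegree_lt_natDegree h (Polynomial.degree_modByMonic_lt p hPbmonic)
        omega
    have hLPb : L q ρ v (Pb * (p /ₘ Pb)) i = 0 := tel1 hvq hρne k i hk hmin _
    have hLP : L q ρ v P i = 0 := by
      have := hL i
      conv at this => rw [← hPeq]
      rw [L_add] at this
      rw [hLPb, add_zero] at this
      exact this
    have hcoeffk : P.coeff k = 0 := by
      have h2 := tel2 hvq hρne k i hk hmin P hPdeg
      rw [hLP] at h2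
      have hne : (∏ s ∈ Finset.range k, -(v (ρ^[s] i))) ≠ 0 := by
        apply Finset.prod_ne_zero_iff.2
        intro s hs
        have := hvne _ (hmin s (Finset.mem_range.1 hs))
        simpa using this
      exact (mul_eq_zero.1 h2.symm).resolve_left hne
    -- P vanishes on the k ancestor values
    have hroots : ∀ s : ℕ, 1 ≤ s → s ≤ k → P.eval (v (ρ^[s] i)) = 0 := by
      intro s hs1 hsk
      set j := ρ^[s] i with hj
      have hjq : ρ^[k - s] j = q := by
        rw [hj, ← Function.iterate_add_apply]
        rw [Nat.sub_add_cancel hsk]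
        exact hk
      have hkj : Nat.find (hρroot j) ≤ k - s := Nat.find_le hjq
      have hpj : p.eval (v j) = 0 := by
        apply IH (Nat.find (hρroot j)) (by omega) j (Nat.find_spec (hρroot j))
        intro t ht
        exact Nat.find_min (hρroot j) ht
      have hPbj : Pb.eval (v j) = 0 := by
        rw [hPb, Polynomial.eval_prod]
        apply Finset.prod_eq_zero (Finset.mem_range.2 (by omega : s < k + 1))
        simp [hj]
      have := congrArg (Polynomial.eval (v j)) hPeq
      rw [eval_add, eval_mul, hPbj, zero_mul, add_zero] at this
      rw [this, hpj]
    have hP0 : P = 0 := by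
      rcases eq_or_ne P 0 with h | h
      · exact h
      have hdeglt : P.natDegree < k := by
        rcases lt_or_eq_of_le hPdeg with h2 | h2
        · exact h2
        · exfalso
          apply h
          have : P.leadingCoeff = 0 := by rw [Polynomial.leadingCoeff, h2, hcoeffk]
          exact Polynomial.leadingCoeff_eq_zero.1 this
      exfalso
      apply h
      apply Polynomial.eq_zero_of_natDegree_lt_card_of_eval_eq_zero' P
        ((Finset.Icc 1 k).image (fun s => v (ρ^[s] i)))
      · intro x hx
        obtain ⟨s, hs, rfl⟩ := Finset.mem_image.1 hx
        exact hroots s (Finset.mem_Icc.1 hs).1 (Finset.mem_Icc.1 hs).2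
      · rw [Finset.card_image_of_injOn, Nat.card_Icc]
        · omega
        · intro a ha b hb hab
          exact hpath a b (Finset.mem_Icc.1 ha).2 (Finset.mem_Icc.1 hb).2 (hvdist hab)
    -- conclude
    have := congrArg (Polynomial.eval (v i)) hPeq
    rw [eval_add, eval_mul, hPbvi, zero_mul, add_zero, hP0, eval_zero] at this
    exact this.symm

end vanish

noncomputable def Cm (q : Fin m) (ρ : Fin m → Fin m) (v : Fin m → ℝ) :
    Matrix (Fin m) (Fin m) ℝ := fun i n => (G q ρ v ^ (n : ℕ)) i q

lemma det_Cm_ne_zero (hvq : v q = 0) (hρne : ∀ i, i ≠ q → ρ i ≠ i)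
    (hρroot : ∀ i : Fin m, ∃ k : ℕ, ρ^[k] i = q)
    (hvdist : Function.Injective v) (hvne : ∀ i, i ≠ q → v i ≠ 0) :
    (Cm q ρ v).det ≠ 0 := by
  intro hdet
  obtain ⟨a, ha, hCa⟩ := (Matrix.exists_mulVec_eq_zero_iff).2 hdet
  set p : ℝ[X] := ∑ n : Fin m, C (a n) * X ^ (n : ℕ) with hp
  have hLp : ∀ i, L q ρ v p i = 0 := by
    intro i
    have h1 : L q ρ v p i = ∑ n : Fin m, a n * (G q ρ v ^ (n : ℕ)) i q := by
      rw [L, hp, map_sum, Matrix.sum_apply]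
      refine Finset.sum_congr rfl fun n _ => ?_
      rw [_root_.map_mul, aeval_C, map_pow, aeval_X, Algebra.algebraMap_eq_smul_one,
        smul_mul_assoc, one_mul, Matrix.smul_apply, smul_eq_mul]
    have h2 := congrFun hCa i
    rw [h1]
    simpa [Matrix.mulVec, dotProduct, Cm, mul_comm] using h2
  have hm0 : 0 < m := q.pos
  have hdegp : p.natDegree < m := by
    have h1 : p.natDegree ≤ m - 1 := by
      apply Polynomial.natDegree_sum_le_of_forall_le
      intro n _
      refine le_trans (Polynomial.natDegree_C_mul_le _ _) ?_
      rw [Polynomial.natDegree_X_pow]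
      omega
    omega
  have heval : ∀ i, p.eval (v i) = 0 := fun i =>
    vanish hvq hρne hρroot hvdist hvne p hLp (Nat.find (hρroot i)) i
      (Nat.find_spec (hρroot i)) (fun t ht => Nat.find_min (hρroot i) ht)
  have hp0 : p = 0 :=
    Polynomial.eq_zero_of_natDegree_lt_card_of_eval_eq_zero p hvdist heval
      (by simpa using hdegp)
  apply ha
  funext n
  have hcoeff : p.coeff (n : ℕ) = a n := by
    rw [hp, Polynomial.finset_sum_coeff]
    rw [Finset.sum_eq_single n]
    · simp
    · intro t _ htn
      rw [Polynomial.coeff_C_mul, Polynomial.coeff_X_pow,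
        if_neg (fun h => htn (Fin.ext h.symm)), mul_zero]
    · intro h
      exact absurd (Finset.mem_univ n) h
  rw [← hcoeff, hp0, Polynomial.coeff_zero]
  rfl

end TreeCtrb

lemma rank_submatrix_id {k o l : Type*} [Fintype l] [Fintype o] [Fintype k] [DecidableEq o]
    [DecidableEq l] (M : Matrix k l ℝ) (e : o ≃ l) :
    (M.submatrix _root_.id ⇑e).rank = M.rank := by
  rw [Matrix.rank, Matrix.rank, Matrix.mulVecLin_submatrix _root_.id e,
    LinearMap.range_comp, LinearMap.range_comp,
    show LinearMap.funLeft ℝ ℝ ⇑e.symm = (LinearEquiv.funCongrLeft ℝ ℝ e.symm :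
      ((o → ℝ) →ₗ[ℝ] (l → ℝ))) from rfl,
    LinearEquiv.range, Submodule.map_top,
    show LinearMap.funLeft ℝ ℝ (_root_.id : k → k) = LinearMap.id from rfl,
    Submodule.map_id]

open TreeCtrb in
/-- Given a directed spanning tree of the strongly connected
graph `ℕ` rooted at `q` with arcs oriented away from `q` (encoded by the parent
map `ρ`), and values `v` with `v_q = 0`, pairwise distinct and nonzero off the
root, the matrix `G` with `g_{ii} = vᵢ`, `g_{iρᵢ} = −vᵢ` (`i ≠ q`) and zeros
elsewhere makes `(G, b_q)` a controllable pair. -/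
theorem tree_matrix_controllable
    {m : ℕ} (hm : 1 < m)
    (adj : Fin m → Fin m → Prop)
    (hconn : ∀ i j : Fin m, Relation.ReflTransGen adj i j)
    (q : Fin m) (ρ : Fin m → Fin m)
    (hρadj : ∀ i, i ≠ q → adj (ρ i) i)
    (hρne : ∀ i, i ≠ q → ρ i ≠ i)
    (hρroot : ∀ i : Fin m, ∃ k : ℕ, ρ^[k] i = q)
    (v : Fin m → ℝ)
    (hvq : v q = 0)
    (hvdist : Function.Injective v)
    (hvne : ∀ i, i ≠ q → v i ≠ 0) :
    Controllable
      (Matrix.of fun i j : Fin m =>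
        if j = i then v i else if i ≠ q ∧ j = ρ i then -(v i) else 0)
      (Matrix.of fun i (_ : Fin 1) => if i = q then (1 : ℝ) else 0) := by
  classical
  have hdet := det_Cm_ne_zero hvq hρne hρroot hvdist hvne
  have hunit : IsUnit (Cm q ρ v) :=
    (Matrix.isUnit_iff_isUnit_det _).2 (isUnit_iff_ne_zero.2 hdet)
  have hrank : (Cm q ρ v).rank = Fintype.card (Fin m) := Matrix.rank_of_isUnit _ hunit
  show Controllable (G q ρ v) (Matrix.of fun i (_ : Fin 1) => if i = q then (1 : ℝ) else 0)
  unfold Controllable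
  have hEq : ctrbMat (G q ρ v)
      (Matrix.of fun i (_ : Fin 1) => if i = q then (1 : ℝ) else 0) (Fintype.card (Fin m)) =
      (Cm q ρ v).submatrix _root_.id
        ⇑((Equiv.prodUnique (Fin (Fintype.card (Fin m))) (Fin 1)).trans
          (finCongr (Fintype.card_fin m))) := by
    ext i np
    obtain ⟨n, t⟩ := np
    simp only [ctrbMat, Matrix.of_apply, Matrix.mul_apply, Matrix.submatrix_apply,
      Equiv.coe_trans, Function.comp_apply, Cm]
    rw [Finset.sum_eq_single q]
    · simp [Equiv.prodUnique]
    · intro j _ hj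
      rw [if_neg hj, mul_zero]
    · intro h
      exact absurd (Finset.mem_univ q) h
  rw [hEq, rank_submatrix_id, hrank]
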